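/- The ideal 𝔰𝔩_{f,2} := (5u² − 48s − 20t, 144s² + 60s + 25) of the polynomial ring ℚ[s,t,u] is a prime ideal, and the ideal 𝔰𝔩_{f,4} := (12s − 5, u² − 4t − 4) of ℚ[s,t,u] is a prime ideal. -/

import Mathlib

open MvPolynomial


lemma ker_eq_span {R S : Type*} [CommRing R] [CommRing S] (a b : R)
    (φ : R →+* S) (ψ : S →+* R ⧸ Ideal.span {a, b})
    (ha : φ a = 0) (hb : φ b = 0)
    (hcomp : ψ.comp φ = Ideal.Quotient.mk (Ideal.span {a, b})) :
    Ideal.span {a, b} = RingHom.ker φ := by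
  apply le_antisymm
  · rw [Ideal.span_le]
    rintro x hx
    rcases hx with rfl | rfl
    · exact ha
    · exact hb
  · intro p hp
    have h2 : ψ (φ p) = Ideal.Quotient.mk _ p := by
      rw [← RingHom.comp_apply, hcomp]
    rw [RingHom.mem_ker] at hp
    rw [hp, map_zero] at h2
    exact (Ideal.Quotient.eq_zero_iff_mem).mp h2.symm

set_option maxHeartbeats 1000000

noncomputable section

def fq : Polynomial ℚ := Polynomial.X ^ 2 - Polynomial.C (-75 : ℚ)

lemma fq_irred : Irreducible fq := by
  apply X_pow_sub_C_irreducible_of_prime Nat.prime_two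
  intro b
  nlinarith [sq_nonneg b]

instance : Fact (Irreducible fq) := ⟨fq_irred⟩

abbrev K := AdjoinRoot fq

lemma root_sq : (AdjoinRoot.root fq) ^ 2 = -75 := by
  have h := AdjoinRoot.eval₂_root fq
  simp only [fq, Polynomial.eval₂_sub, Polynomial.eval₂_pow, Polynomial.eval₂_X,
    Polynomial.eval₂_C, Polynomial.eval₂_neg, Polynomial.eval₂_ofNat, map_neg, map_ofNat] at h
  simp only [fq] at h ⊢
  have h2 : AdjoinRoot.mk (Polynomial.X ^ 2 - Polynomial.C (-75 : ℚ)) (Polynomial.X ^ 2 - Polynomial.C (-75 : ℚ)) = 0 := AdjoinRoot.mk_self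
  rw [map_sub, map_pow, AdjoinRoot.mk_X, AdjoinRoot.mk_C] at h2
  simp only [map_neg, map_ofNat] at h2
  rw [sub_eq_zero] at h2
  exact h2

instance : CharZero K := charZero_of_injective_algebraMap (algebraMap ℚ K).injective

def α : K := algebraMap ℚ K (1/24) * (AdjoinRoot.root fq - 5)

lemma h24 : algebraMap ℚ K (1/24) = (24 : K)⁻¹ := by
  rw [eq_ratCast]; push_cast; ring

lemma h20 : algebraMap ℚ K (1/20) = (20 : K)⁻¹ := by
  rw [eq_ratCast]; push_cast; ring

lemma alpha_zero : (144 : K) * α ^ 2 + 60 * α + 25 = 0 := by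
  rw [α, h24]
  linear_combination (1/4 : K) * root_sq

def φ2 : MvPolynomial (Fin 3) ℚ →+* Polynomial K :=
  (aeval ![Polynomial.C α,
    Polynomial.C (algebraMap ℚ K (1/20)) * (5 * Polynomial.X ^ 2 - 48 * Polynomial.C α),
    Polynomial.X]).toRingHom

lemma sl2_prime :
    (Ideal.span {(5 * X 2 ^ 2 - 48 * X 0 - 20 * X 1 : MvPolynomial (Fin 3) ℚ),
        (144 * X 0 ^ 2 + 60 * X 0 + 25 : MvPolynomial (Fin 3) ℚ)}).IsPrime := by
  set g1 : MvPolynomial (Fin 3) ℚ := 5 * X 2 ^ 2 - 48 * X 0 - 20 * X 1 with hg1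
  set g2 : MvPolynomial (Fin 3) ℚ := 144 * X 0 ^ 2 + 60 * X 0 + 25 with hg2
  set I : Ideal (MvPolynomial (Fin 3) ℚ) := Ideal.span {g1, g2} with hI
  have hg1I : g1 ∈ I := Ideal.subset_span (by simp)
  have hg2I : g2 ∈ I := Ideal.subset_span (by simp)
  have ha : φ2 g1 = 0 := by
    apply Polynomial.funext
    intro r
    simp [φ2, hg1, h20]
  have hb : φ2 g2 = 0 := by
    apply Polynomial.funext
    intro r
    simp [φ2, hg2]
    linear_combination alpha_zero
  -- the inverse map
  set q : MvPolynomial (Fin 3) ℚ ⧸ I := Ideal.Quotient.mk I (24 * X 0 + 5) with hq'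
  have hg2z : Ideal.Quotient.mk I g2 = 0 := Ideal.Quotient.eq_zero_iff_mem.mpr hg2I
  have hqsq : q ^ 2 + 75 = 0 := by
    have e : ((24 * X 0 + 5 : MvPolynomial (Fin 3) ℚ)) ^ 2 + 75 = 4 * g2 := by
      apply MvPolynomial.funext; intro x; simp [hg2]; ring
    rw [hq', ← map_pow, ← map_ofNat (Ideal.Quotient.mk I) 75, ← map_add, e, map_mul, hg2z,
      mul_zero]
  have hq : Polynomial.eval₂ (algebraMap ℚ (MvPolynomial (Fin 3) ℚ ⧸ I)) q fq = 0 := by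
    simp only [fq, Polynomial.eval₂_sub, Polynomial.eval₂_pow, Polynomial.eval₂_X,
      Polynomial.eval₂_C, Polynomial.eval₂_neg, Polynomial.eval₂_ofNat, map_neg, map_ofNat]
    linear_combination hqsq
  set L : K →+* MvPolynomial (Fin 3) ℚ ⧸ I := AdjoinRoot.lift (algebraMap ℚ _) q hq with hL
  set ψ : Polynomial K →+* (MvPolynomial (Fin 3) ℚ ⧸ I) :=
    Polynomial.eval₂RingHom L (Ideal.Quotient.mk I (X 2)) with hψ
  have hQ : ∀ r : ℚ, algebraMap ℚ (MvPolynomial (Fin 3) ℚ ⧸ I) r = Ideal.Quotient.mk I (C r) := by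
    intro r
    rw [IsScalarTower.algebraMap_apply ℚ (MvPolynomial (Fin 3) ℚ), Ideal.Quotient.algebraMap_eq,
      algebraMap_eq]
  have hLconst : ∀ r : ℚ, L (algebraMap ℚ K r) = Ideal.Quotient.mk I (C r) := by
    intro r
    rw [hL, ← RingHom.comp_apply, RingHom.ext_rat ((AdjoinRoot.lift _ q hq).comp (algebraMap ℚ K))
      (algebraMap ℚ _), hQ]
  have hLα : L α = Ideal.Quotient.mk I (C (1/24 : ℚ) * ((24 * X 0 + 5) - C 5)) := by
    rw [α, map_mul, map_sub, hLconst, AdjoinRoot.lift_root, hq']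
    rw [show ((5 : K)) = algebraMap ℚ K 5 by rw [eq_ratCast]; push_cast; ring, hLconst,
      ← map_sub, ← map_mul]
  have hcomp : ψ.comp φ2 = Ideal.Quotient.mk I := by
    apply MvPolynomial.ringHom_ext'
    · exact RingHom.ext_rat _ _
    · intro i
      fin_cases i
      · show ψ (φ2 (X 0)) = Ideal.Quotient.mk I (X 0)
        have h1 : φ2 (X 0) = Polynomial.C α := by simp [φ2]
        rw [h1, hψ, Polynomial.coe_eval₂RingHom, Polynomial.eval₂_C, hLα]
        congr 1
        apply MvPolynomial.funext; intro x; simp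
      · show ψ (φ2 (X 1)) = Ideal.Quotient.mk I (X 1)
        have h1 : φ2 (X 1) = Polynomial.C (algebraMap ℚ K (1/20)) *
            (5 * Polynomial.X ^ 2 - 48 * Polynomial.C α) := by simp [φ2]
        rw [h1, hψ, Polynomial.coe_eval₂RingHom]
        simp only [Polynomial.eval₂_mul, Polynomial.eval₂_sub, Polynomial.eval₂_pow,
          Polynomial.eval₂_C, Polynomial.eval₂_X, Polynomial.eval₂_ofNat]
        rw [hLconst, hLα]
        rw [show ((5 : MvPolynomial (Fin 3) ℚ ⧸ I)) = Ideal.Quotient.mk I 5 from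
          (map_ofNat (Ideal.Quotient.mk I) 5).symm,
          show ((48 : MvPolynomial (Fin 3) ℚ ⧸ I)) = Ideal.Quotient.mk I 48 from
          (map_ofNat (Ideal.Quotient.mk I) 48).symm,
          ← map_pow, ← map_mul, ← map_mul, ← map_sub, ← map_mul, Ideal.Quotient.eq]
        have h2 : C (1/20 : ℚ) * (5 * X 2 ^ 2 - 48 * (C (1/24 : ℚ) * ((24 * X 0 + 5) - C 5)))
            - X 1 = C (1/20 : ℚ) * g1 := by
          apply MvPolynomial.funext; intro x; simp [hg1]; ring
        rw [h2]
        exact I.mul_mem_left _ hg1I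
      · show ψ (φ2 (X 2)) = Ideal.Quotient.mk I (X 2)
        have h1 : φ2 (X 2) = Polynomial.X := by simp [φ2]
        rw [h1, hψ, Polynomial.coe_eval₂RingHom, Polynomial.eval₂_X]
  have := ker_eq_span g1 g2 φ2 ψ ha hb hcomp
  rw [hI, this]
  exact RingHom.ker_isPrime φ2

noncomputable def φ4 : MvPolynomial (Fin 3) ℚ →+* Polynomial ℚ :=
  (aeval ![Polynomial.C (5/12 : ℚ), Polynomial.C (1/4 : ℚ) * Polynomial.X ^ 2 - 1,
    Polynomial.X]).toRingHom

lemma sl4_prime :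
    (Ideal.span {(12 * X 0 - 5 : MvPolynomial (Fin 3) ℚ),
        (X 2 ^ 2 - 4 * X 1 - 4 : MvPolynomial (Fin 3) ℚ)}).IsPrime := by
  set g1 : MvPolynomial (Fin 3) ℚ := 12 * X 0 - 5 with hg1
  set g2 : MvPolynomial (Fin 3) ℚ := X 2 ^ 2 - 4 * X 1 - 4 with hg2
  set I : Ideal (MvPolynomial (Fin 3) ℚ) := Ideal.span {g1, g2} with hI
  have hg1I : g1 ∈ I := Ideal.subset_span (by simp)
  have hg2I : g2 ∈ I := Ideal.subset_span (by simp)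
  set ψ : Polynomial ℚ →+* (MvPolynomial (Fin 3) ℚ ⧸ I) :=
    Polynomial.eval₂RingHom (algebraMap ℚ _) (Ideal.Quotient.mk I (X 2)) with hψ
  have ha : φ4 g1 = 0 := by
    apply Polynomial.funext
    intro r
    simp [φ4, hg1]
    ring
  have hb : φ4 g2 = 0 := by
    apply Polynomial.funext
    intro r
    simp [φ4, hg2]
    ring
  have hQ : ∀ r : ℚ, algebraMap ℚ (MvPolynomial (Fin 3) ℚ ⧸ I) r = Ideal.Quotient.mk I (C r) := by
    intro r
    rw [IsScalarTower.algebraMap_apply ℚ (MvPolynomial (Fin 3) ℚ), Ideal.Quotient.algebraMap_eq,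
      algebraMap_eq]
  have hcomp : ψ.comp φ4 = Ideal.Quotient.mk I := by
    apply MvPolynomial.ringHom_ext'
    · exact RingHom.ext_rat _ _
    · intro i
      fin_cases i
      · show ψ (φ4 (X 0)) = Ideal.Quotient.mk I (X 0)
        have h1 : φ4 (X 0) = Polynomial.C (5/12 : ℚ) := by simp [φ4]
        rw [h1, hψ, Polynomial.coe_eval₂RingHom, Polynomial.eval₂_C, hQ, Ideal.Quotient.eq]
        have h2 : C (5/12 : ℚ) - X 0 = C (-1/12 : ℚ) * g1 := by
          apply MvPolynomial.funext; intro x; simp [hg1]; ring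
        rw [h2]; exact I.mul_mem_left _ hg1I
      · show ψ (φ4 (X 1)) = Ideal.Quotient.mk I (X 1)
        have h1 : φ4 (X 1) = Polynomial.C (1/4 : ℚ) * Polynomial.X ^ 2 - 1 := by simp [φ4]
        rw [h1, hψ, Polynomial.coe_eval₂RingHom]
        simp only [Polynomial.eval₂_sub, Polynomial.eval₂_mul, Polynomial.eval₂_one,
          Polynomial.eval₂_pow, Polynomial.eval₂_C, Polynomial.eval₂_X]
        rw [hQ, ← map_pow, ← map_mul, ← map_one (Ideal.Quotient.mk I), ← map_sub,
          Ideal.Quotient.eq]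
        have h2 : C (1/4 : ℚ) * X 2 ^ 2 - 1 - X 1 = C (1/4 : ℚ) * g2 := by
          apply MvPolynomial.funext; intro x; simp [hg2]; ring
        rw [h2]; exact I.mul_mem_left _ hg2I
      · show ψ (φ4 (X 2)) = Ideal.Quotient.mk I (X 2)
        have h1 : φ4 (X 2) = Polynomial.X := by simp [φ4]
        rw [h1, hψ, Polynomial.coe_eval₂RingHom, Polynomial.eval₂_X]
  have := ker_eq_span g1 g2 φ4 ψ ha hb hcomp
  rw [hI, this]
  exact RingHom.ker_isPrime φ4

end


/-- The ideals `𝔰𝔩_{f,2} = (5u² − 48s − 20t, 144s² + 60s + 25)` and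
`𝔰𝔩_{f,4} = (12s − 5, u² − 4t − 4)` of `ℚ[s,t,u]` are prime
(variables `X 0 = s`, `X 1 = t`, `X 2 = u`). -/
theorem sl_f2_and_sl_f4_isPrime :
    (Ideal.span {(5 * X 2 ^ 2 - 48 * X 0 - 20 * X 1 : MvPolynomial (Fin 3) ℚ),
        (144 * X 0 ^ 2 + 60 * X 0 + 25 : MvPolynomial (Fin 3) ℚ)}).IsPrime ∧
    (Ideal.span {(12 * X 0 - 5 : MvPolynomial (Fin 3) ℚ),
        (X 2 ^ 2 - 4 * X 1 - 4 : MvPolynomial (Fin 3) ℚ)}).IsPrime := by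
  exact ⟨sl2_prime, sl4_prime⟩
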